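/- Let 𝒫 and ℛ be finite measurable partitions of Ξ such that 𝒫 ℙ-refines ℛ. Then for every x ∈ ℝⁿ one has V_ℛ(x) ≤ V_𝒫(x) (as elements of ℝ ∪ {+∞}). -/

import Mathlib

open MeasureTheory
open scoped BigOperators Classical

noncomputable section

/-- The space of alea `Ξ = ℝ^{l×n} × ℝ^l`: pairs `ξ = (T, h)`. -/
abbrev Xi (l n : ℕ) := (Fin l → Fin n → ℝ) × (Fin l → ℝ)

/-- The dual admissible polyhedron `D = {λ : Wᵀλ ≤ q}`. -/
def polyD {l m : ℕ} (W : Fin l → Fin m → ℝ) (q : Fin m → ℝ) : Set (Fin l → ℝ) :=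
  {lam | ∀ j, (∑ i, W i j * lam i) ≤ q j}

/-- Recourse cost `Q(x, ξ) = sup_{λ ∈ D} ⟨h - Tx, λ⟩ ∈ ℝ ∪ {+∞}` (as an `EReal`). -/
def Qfun {l n m : ℕ} (W : Fin l → Fin m → ℝ) (q : Fin m → ℝ)
    (x : Fin n → ℝ) (ξ : Xi l n) : EReal :=
  ⨆ lam ∈ polyD W q, ((∑ i, (ξ.2 i - ∑ j, ξ.1 i j * x j) * lam i : ℝ) : EReal)

/-- A finite measurable partition of `α`, given as a `Finset` of sets. -/
def IsFinPartition {α : Type*} [MeasurableSpace α] (Ps : Finset (Set α)) : Prop :=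
  (∀ P ∈ Ps, MeasurableSet P) ∧ ((Ps : Set (Set α)).PairwiseDisjoint id) ∧
    ⋃₀ (Ps : Set (Set α)) = Set.univ

/-- Conditional expectation `E[ξ | ξ ∈ P] = E[ξ 1_{ξ ∈ P}] / ℙ[ξ ∈ P]`. -/
def condMean {Ω : Type*} [MeasurableSpace Ω] {l n : ℕ} (ℙ : Measure Ω)
    (ξ : Ω → Xi l n) (P : Set (Xi l n)) : Xi l n :=
  (ℙ (ξ ⁻¹' P)).toReal⁻¹ • ∫ ω in ξ ⁻¹' P, ξ ω ∂ℙ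

/-- Expected cost-to-go of a partition: `V_Ps(x) = Σ_{P ∈ Ps, ℙ[ξ∈P] > 0} ℙ[ξ∈P] Q(x, E[ξ|P])`. -/
def Vpart {Ω : Type*} [MeasurableSpace Ω] {l n m : ℕ} (W : Fin l → Fin m → ℝ)
    (q : Fin m → ℝ) (ℙ : Measure Ω) (ξ : Ω → Xi l n) (Ps : Finset (Set (Xi l n)))
    (x : Fin n → ℝ) : EReal :=
  ∑ P ∈ Ps, if 0 < ℙ (ξ ⁻¹' P) then
    ((ℙ (ξ ⁻¹' P)).toReal : EReal) * Qfun W q x (condMean ℙ ξ P) else 0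

/-- True expected cost-to-go `V(x) = E[Q(x, ξ)] ∈ ℝ ∪ {+∞}`: the real integral when
`Q(x, ξ)` is integrable (a.e. finite with integrable real part), `+∞` otherwise. -/
def Vtrue {Ω : Type*} [MeasurableSpace Ω] {l n m : ℕ} (W : Fin l → Fin m → ℝ)
    (q : Fin m → ℝ) (ℙ : Measure Ω) (ξ : Ω → Xi l n) (x : Fin n → ℝ) : EReal :=
  if (∀ᵐ ω ∂ℙ, Qfun W q x (ξ ω) ≠ ⊤) ∧
      Integrable (fun ω => (Qfun W q x (ξ ω)).toReal) ℙ then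
    (((∫ ω, (Qfun W q x (ξ ω)).toReal ∂ℙ) : ℝ) : EReal)
  else ⊤

/-- `Ps` ℙ-refines `ℛ`: every `P ∈ Ps` is ℙ-essentially contained in some `R ∈ ℛ`. -/
def PRefines {Ω : Type*} [MeasurableSpace Ω] {l n : ℕ} (ℙ : Measure Ω) (ξ : Ω → Xi l n)
    (Ps ℛ : Finset (Set (Xi l n))) : Prop :=
  ∀ P ∈ Ps, ∃ R ∈ ℛ, ℙ (ξ ⁻¹' (P ∩ R)) = ℙ (ξ ⁻¹' P)

/-- Conditional expectation `E[Q(x,ξ) | ξ ∈ P] ∈ ℝ ∪ {+∞}`: equal to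
`E[Q(x,ξ) 1_{ξ∈P}] / ℙ[ξ∈P]` when `Q(x,ξ) 1_{ξ∈P}` is integrable, `+∞` otherwise. -/
def condQ {Ω : Type*} [MeasurableSpace Ω] {l n m : ℕ} (W : Fin l → Fin m → ℝ)
    (q : Fin m → ℝ) (ℙ : Measure Ω) (ξ : Ω → Xi l n) (x : Fin n → ℝ)
    (P : Set (Xi l n)) : EReal :=
  if (∀ᵐ ω ∂ℙ, ξ ω ∈ P → Qfun W q x (ξ ω) ≠ ⊤) ∧
      IntegrableOn (fun ω => (Qfun W q x (ξ ω)).toReal) (ξ ⁻¹' P) ℙ then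
    (((ℙ (ξ ⁻¹' P)).toReal⁻¹ * ∫ ω in ξ ⁻¹' P, (Qfun W q x (ξ ω)).toReal ∂ℙ : ℝ) : EReal)
  else ⊤

/-- Subdifferential of an `EReal`-valued function at `x`. -/
def SubDiff {n : ℕ} (f : (Fin n → ℝ) → EReal) (x : Fin n → ℝ) : Set (Fin n → ℝ) :=
  {g | ∀ y, f x + ((∑ i, g i * (y i - x i) : ℝ) : EReal) ≤ f y}

/-! ### Auxiliary material -/

/-- Coercion `ℝ → EReal` as an additive monoid hom. -/
def erealCoeHom : ℝ →+ EReal := ⟨⟨Real.toEReal, EReal.coe_zero⟩, EReal.coe_add⟩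

lemma ereal_coe_sum {ι : Type*} (s : Finset ι) (f : ι → ℝ) :
    ((∑ i ∈ s, f i : ℝ) : EReal) = ∑ i ∈ s, ((f i : ℝ) : EReal) :=
  map_sum erealCoeHom f s

lemma ereal_sum_ne_bot {ι : Type*} (s : Finset ι) (f : ι → EReal)
    (h : ∀ i ∈ s, f i ≠ ⊥) : ∑ i ∈ s, f i ≠ ⊥ := by
  classical
  induction s using Finset.induction with
  | empty => simp
  | insert _ _ hx ih =>
    rw [Finset.sum_insert hx, Ne, EReal.add_eq_bot_iff]
    push_neg
    exact ⟨h _ (Finset.mem_insert_self _ _),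
      ih fun i hi => h i (Finset.mem_insert_of_mem hi)⟩

lemma ereal_mul_ne_bot (a : ℝ) (ha : 0 < a) (x : EReal) (hx : x ≠ ⊥) :
    (a : EReal) * x ≠ ⊥ := by
  by_cases ht : x = ⊤
  · rw [ht, EReal.coe_mul_top_of_pos ha]; simp
  · rw [← EReal.coe_toReal ht hx, ← EReal.coe_mul]; exact EReal.coe_ne_bot _

/-- The linear functional `ξ ↦ ⟨h - Tx, λ⟩` on `Ξ`. -/
def phiL {l n : ℕ} (x : Fin n → ℝ) (lam : Fin l → ℝ) : Xi l n →ₗ[ℝ] ℝ where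
  toFun ξ0 := ∑ i, (ξ0.2 i - ∑ j, ξ0.1 i j * x j) * lam i
  map_add' a b := by
    rw [← Finset.sum_add_distrib]
    refine Finset.sum_congr rfl fun i _ => ?_
    have h : ∑ j, (a.1 i j + b.1 i j) * x j
        = (∑ j, a.1 i j * x j) + ∑ j, b.1 i j * x j := by
      rw [← Finset.sum_add_distrib]
      exact Finset.sum_congr rfl fun j _ => add_mul _ _ _
    simp only [Prod.fst_add, Prod.snd_add, Pi.add_apply, h]
    ring
  map_smul' c a := by
    simp only [RingHom.id_apply, smul_eq_mul]
    rw [Finset.mul_sum]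
    refine Finset.sum_congr rfl fun i _ => ?_
    have h : ∑ j, (c • a).1 i j * x j = c * ∑ j, a.1 i j * x j := by
      rw [Finset.mul_sum]
      refine Finset.sum_congr rfl fun j _ => ?_
      simp only [Prod.smul_fst, Pi.smul_apply, smul_eq_mul]; ring
    rw [h]
    simp only [Prod.smul_snd, Pi.smul_apply, smul_eq_mul]
    ring

lemma condMean_def {Ω : Type*} [MeasurableSpace Ω] {l n : ℕ} (ℙ : Measure Ω)
    (ξ : Ω → Xi l n) (P : Set (Xi l n)) :
    condMean ℙ ξ P = (ℙ (ξ ⁻¹' P)).toReal⁻¹ • ∫ ω in ξ ⁻¹' P, ξ ω ∂ℙ := rfl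

lemma phi_le_Qfun {l n m : ℕ} (W : Fin l → Fin m → ℝ) (q : Fin m → ℝ)
    (x : Fin n → ℝ) (ξ0 : Xi l n) {lam : Fin l → ℝ} (hlam : lam ∈ polyD W q) :
    ((phiL x lam ξ0 : ℝ) : EReal) ≤ Qfun W q x ξ0 :=
  le_iSup₂ (f := fun lam (_ : lam ∈ polyD W q) =>
    ((∑ i, (ξ0.2 i - ∑ j, ξ0.1 i j * x j) * lam i : ℝ) : EReal)) lam hlam

lemma Qfun_ne_bot {l n m : ℕ} (W : Fin l → Fin m → ℝ) (q : Fin m → ℝ)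
    (hD : (polyD W q).Nonempty) (x : Fin n → ℝ) (ξ0 : Xi l n) :
    Qfun W q x ξ0 ≠ ⊥ := by
  obtain ⟨lam0, hlam0⟩ := hD
  exact ((EReal.bot_lt_coe _).trans_le (phi_le_Qfun W q x ξ0 hlam0)).ne'

/-- Lemma 2, Eq. (10): if `Ps` ℙ-refines `Rs` then `V_Rs ≤ V_Ps`. -/
theorem refinement_increases_partition_value
    {Ω : Type*} [MeasurableSpace Ω] {l n m : ℕ}
    (hl : 0 < l) (hn : 0 < n) (hm : 0 < m)
    (W : Fin l → Fin m → ℝ) (q : Fin m → ℝ) (hD : (polyD W q).Nonempty)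
    (ℙ : Measure Ω) [IsProbabilityMeasure ℙ]
    (ξ : Ω → Xi l n) (hξmeas : Measurable ξ) (hξint : Integrable ξ ℙ)
    (Ps Rs : Finset (Set (Xi l n)))
    (hPs : IsFinPartition Ps) (hRs : IsFinPartition Rs)
    (href : PRefines ℙ ξ Ps Rs) :
    ∀ x : Fin n → ℝ, Vpart W q ℙ ξ Rs x ≤ Vpart W q ℙ ξ Ps x := by
  intro x
  obtain ⟨hPm, hPd, hPu⟩ := hPs
  obtain ⟨hRm, hRd, hRu⟩ := hRs
  choose! r hrRs hrMeas using href
  rw [Vpart, Vpart, ← Finset.sum_fiberwise_of_maps_to hrRs]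
  refine Finset.sum_le_sum fun R hR => ?_
  have hfinmeas : ∀ s : Set Ω, ℙ s ≠ ⊤ := fun s => measure_ne_top ℙ s
  by_cases hRpos : 0 < ℙ (ξ ⁻¹' R)
  swap
  · -- R has zero probability: all fiber terms vanish too
    have hR0 : ℙ (ξ ⁻¹' R) = 0 := le_antisymm (not_lt.mp hRpos) (zero_le)
    rw [if_neg hRpos]
    have hz : ∀ P ∈ Ps.filter (fun P => r P = R), (if 0 < ℙ (ξ ⁻¹' P) then
        ((ℙ (ξ ⁻¹' P)).toReal : EReal) * Qfun W q x (condMean ℙ ξ P) else 0) = 0 := by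
      intro P hP
      obtain ⟨hPPs, hrP⟩ := Finset.mem_filter.mp hP
      rw [if_neg]
      intro hpos
      have h1 : ℙ (ξ ⁻¹' (P ∩ R)) = ℙ (ξ ⁻¹' P) := hrP ▸ hrMeas P hPPs
      have h2 : ℙ (ξ ⁻¹' (P ∩ R)) ≤ ℙ (ξ ⁻¹' R) :=
        measure_mono (Set.preimage_mono Set.inter_subset_right)
      rw [h1, hR0] at h2
      exact absurd (le_antisymm h2 (zero_le)) hpos.ne'
    rw [Finset.sum_congr rfl hz, Finset.sum_const_zero]
  -- main case: ℙ(ξ ∈ R) > 0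
  have hAm : ∀ P ∈ Ps, MeasurableSet (ξ ⁻¹' (P ∩ R)) :=
    fun P hP => hξmeas ((hPm P hP).inter (hRm R hR))
  have hAd : (↑Ps : Set (Set (Xi l n))).Pairwise
      (Function.onFun Disjoint fun P => ξ ⁻¹' (P ∩ R)) := by
    intro P hP P' hP' hne
    exact Disjoint.preimage ξ ((hPd hP hP' hne).mono
      Set.inter_subset_left Set.inter_subset_left)
  have hcover : ξ ⁻¹' R = ⋃ P ∈ Ps, ξ ⁻¹' (P ∩ R) := by
    have h : (⋃ P ∈ Ps, (P ∩ R)) = R := by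
      have huniv : (⋃ P ∈ Ps, (P : Set (Xi l n))) = Set.univ := by
        rw [← hPu]; ext z; simp [Set.mem_sUnion]
      rw [← Set.iUnion₂_inter, huniv, Set.univ_inter]
    rw [← Set.preimage_iUnion₂, h]
  -- pieces outside the fiber of R are null
  have hzero : ∀ P ∈ Ps, ¬ r P = R → ℙ (ξ ⁻¹' (P ∩ R)) = 0 := by
    intro P hPPs hrne
    by_cases hp0 : ℙ (ξ ⁻¹' P) = 0
    · exact le_antisymm (le_trans (measure_mono
        (Set.preimage_mono Set.inter_subset_left)) hp0.le) (zero_le)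
    · have hdisj : Disjoint (r P) R :=
        hRd (Finset.mem_coe.mpr (hrRs P hPPs)) (Finset.mem_coe.mpr hR) hrne
      have hsub : ξ ⁻¹' (P ∩ R) ⊆ ξ ⁻¹' P \ ξ ⁻¹' (P ∩ r P) := by
        intro ω hω
        exact ⟨hω.1, fun hc => (Set.disjoint_left.mp hdisj) hc.2 hω.2⟩
      have hdm : ℙ (ξ ⁻¹' P \ ξ ⁻¹' (P ∩ r P)) = 0 := by
        rw [measure_diff (Set.preimage_mono Set.inter_subset_left)
          ((hξmeas ((hPm P hPPs).inter (hRm _ (hrRs P hPPs)))).nullMeasurableSet)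
          (hfinmeas _), hrMeas P hPPs, tsub_self]
      exact measure_mono_null hsub hdm
  -- the measure of R is the sum of the measures of its fiber pieces
  have hμR : ℙ (ξ ⁻¹' R) = ∑ P ∈ Ps.filter (fun P => r P = R), ℙ (ξ ⁻¹' P) := by
    rw [hcover, measure_biUnion_finset hAd hAm,
      ← Finset.sum_filter_add_sum_filter_not Ps (fun P => r P = R)]
    have h2 : ∑ P ∈ Ps.filter (fun P => ¬ r P = R), ℙ (ξ ⁻¹' (P ∩ R)) = 0 :=
      Finset.sum_eq_zero fun P hP => by
        obtain ⟨hPPs, hne⟩ := Finset.mem_filter.mp hP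
        exact hzero P hPPs hne
    rw [h2, add_zero]
    refine Finset.sum_congr rfl fun P hP => ?_
    obtain ⟨hPPs, hrP⟩ := Finset.mem_filter.mp hP
    exact hrP ▸ hrMeas P hPPs
  -- the integral over ξ⁻¹' R is the sum of the integrals over the fiber pieces
  have hIntR : ∫ ω in ξ ⁻¹' R, ξ ω ∂ℙ
      = ∑ P ∈ Ps.filter (fun P => r P = R), ∫ ω in ξ ⁻¹' P, ξ ω ∂ℙ := by
    rw [hcover, integral_biUnion_finset Ps hAm hAd
      (fun P _ => hξint.integrableOn),
      ← Finset.sum_filter_add_sum_filter_not Ps (fun P => r P = R)]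
    have h2 : ∑ P ∈ Ps.filter (fun P => ¬ r P = R),
        ∫ ω in ξ ⁻¹' (P ∩ R), ξ ω ∂ℙ = 0 :=
      Finset.sum_eq_zero fun P hP => by
        obtain ⟨hPPs, hne⟩ := Finset.mem_filter.mp hP
        rw [Measure.restrict_eq_zero.mpr (hzero P hPPs hne), integral_zero_measure]
    rw [h2, add_zero]
    refine Finset.sum_congr rfl fun P hP => ?_
    obtain ⟨hPPs, hrP⟩ := Finset.mem_filter.mp hP
    refine setIntegral_congr_set ?_
    rw [MeasureTheory.ae_eq_set]
    constructor
    · rw [Set.diff_eq_empty.mpr (Set.preimage_mono Set.inter_subset_left)]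
      exact measure_empty
    · rw [measure_diff (Set.preimage_mono Set.inter_subset_left)
        (hAm P hPPs).nullMeasurableSet (hfinmeas _)]
      have h3 : ℙ (ξ ⁻¹' (P ∩ R)) = ℙ (ξ ⁻¹' P) := by
        rw [← hrP]; exact hrMeas P hPPs
      rw [h3, tsub_self]
  -- now the EReal estimate
  by_cases htop : ∃ P ∈ Ps.filter (fun P => r P = R),
      0 < ℙ (ξ ⁻¹' P) ∧ Qfun W q x (condMean ℙ ξ P) = ⊤
  · -- some conditional value is +∞ : the RHS is +∞
    obtain ⟨P0, hP0F, hP0pos, hP0top⟩ := htop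
    have hsum : ∑ P ∈ Ps.filter (fun P => r P = R), (if 0 < ℙ (ξ ⁻¹' P) then
        ((ℙ (ξ ⁻¹' P)).toReal : EReal) * Qfun W q x (condMean ℙ ξ P) else 0) = ⊤ := by
      rw [← Finset.add_sum_erase _ _ hP0F, if_pos hP0pos, hP0top,
        EReal.coe_mul_top_of_pos (ENNReal.toReal_pos hP0pos.ne' (hfinmeas _))]
      refine EReal.top_add_of_ne_bot (ereal_sum_ne_bot _ _ fun P _ => ?_)
      by_cases hp : 0 < ℙ (ξ ⁻¹' P)
      · rw [if_pos hp]
        exact ereal_mul_ne_bot _ (ENNReal.toReal_pos hp.ne' (hfinmeas _)) _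
          (Qfun_ne_bot W q hD x _)
      · rw [if_neg hp]; simp
    rw [hsum]; exact le_top
  · -- all conditional values are finite : use convexity of Q in ξ
    push_neg at htop
    have hQeq : ∀ P ∈ Ps.filter (fun P => r P = R), 0 < ℙ (ξ ⁻¹' P) →
        Qfun W q x (condMean ℙ ξ P)
          = (((Qfun W q x (condMean ℙ ξ P)).toReal : ℝ) : EReal) :=
      fun P hP hp => (EReal.coe_toReal (htop P hP hp) (Qfun_ne_bot W q hD x _)).symm
    have hpRpos : (0:ℝ) < (ℙ (ξ ⁻¹' R)).toReal :=
      ENNReal.toReal_pos hRpos.ne' (hfinmeas _)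
    -- the RHS as a real number
    have hRHS : ∑ P ∈ Ps.filter (fun P => r P = R), (if 0 < ℙ (ξ ⁻¹' P) then
        ((ℙ (ξ ⁻¹' P)).toReal : EReal) * Qfun W q x (condMean ℙ ξ P) else 0)
        = ((∑ P ∈ Ps.filter (fun P => r P = R), (if 0 < ℙ (ξ ⁻¹' P) then
            (ℙ (ξ ⁻¹' P)).toReal * (Qfun W q x (condMean ℙ ξ P)).toReal else 0) : ℝ)
          : EReal) := by
      rw [ereal_coe_sum]
      refine Finset.sum_congr rfl fun P hP => ?_
      by_cases hp : 0 < ℙ (ξ ⁻¹' P)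
      · rw [if_pos hp, if_pos hp, hQeq P hP hp, ← EReal.coe_mul, EReal.toReal_coe]
      · rw [if_neg hp, if_neg hp, EReal.coe_zero]
    -- convexity bound at the conditional mean of R
    have hkey : Qfun W q x (condMean ℙ ξ R)
        ≤ ((((ℙ (ξ ⁻¹' R)).toReal)⁻¹ *
            ∑ P ∈ Ps.filter (fun P => r P = R), (if 0 < ℙ (ξ ⁻¹' P) then
              (ℙ (ξ ⁻¹' P)).toReal * (Qfun W q x (condMean ℙ ξ P)).toReal else 0)
            : ℝ) : EReal) := by
      rw [Qfun]
      refine iSup₂_le fun lam hlam => ?_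
      rw [EReal.coe_le_coe_iff]
      show phiL x lam (condMean ℙ ξ R) ≤ _
      have hsmul : condMean ℙ ξ R = ((ℙ (ξ ⁻¹' R)).toReal)⁻¹ •
          ∑ P ∈ Ps.filter (fun P => r P = R), ∫ ω in ξ ⁻¹' P, ξ ω ∂ℙ := by
        rw [condMean_def, hIntR]
      rw [hsmul, _root_.map_smul, _root_.map_sum, smul_eq_mul]
      refine mul_le_mul_of_nonneg_left ?_ (inv_nonneg.mpr hpRpos.le)
      refine Finset.sum_le_sum fun P hP => ?_
      by_cases hp : 0 < ℙ (ξ ⁻¹' P)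
      · rw [if_pos hp]
        have hpP : (0:ℝ) < (ℙ (ξ ⁻¹' P)).toReal :=
          ENNReal.toReal_pos hp.ne' (hfinmeas _)
        have hv : ∫ ω in ξ ⁻¹' P, ξ ω ∂ℙ
            = (ℙ (ξ ⁻¹' P)).toReal • condMean ℙ ξ P := by
          rw [condMean_def, smul_smul, mul_inv_cancel₀ hpP.ne', one_smul]
        rw [hv, _root_.map_smul, smul_eq_mul]
        refine mul_le_mul_of_nonneg_left ?_ hpP.le
        have hle := phi_le_Qfun W q x (condMean ℙ ξ P) hlam
        rw [hQeq P hP hp] at hle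
        exact EReal.coe_le_coe_iff.mp hle
      · rw [if_neg hp]
        have hz : ℙ (ξ ⁻¹' P) = 0 := le_antisymm (not_lt.mp hp) (zero_le)
        rw [Measure.restrict_eq_zero.mpr hz, integral_zero_measure, _root_.map_zero]
    -- conclude
    rw [if_pos hRpos, hRHS]
    have hQne : Qfun W q x (condMean ℙ ξ R) ≠ ⊤ :=
      (hkey.trans_lt (EReal.coe_lt_top _)).ne
    have hQnb := Qfun_ne_bot W q hD x (condMean ℙ ξ R)
    rw [← EReal.coe_toReal hQne hQnb, ← EReal.coe_mul, EReal.coe_le_coe_iff]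
    have ht : (Qfun W q x (condMean ℙ ξ R)).toReal
        ≤ ((ℙ (ξ ⁻¹' R)).toReal)⁻¹ *
          ∑ P ∈ Ps.filter (fun P => r P = R), (if 0 < ℙ (ξ ⁻¹' P) then
            (ℙ (ξ ⁻¹' P)).toReal * (Qfun W q x (condMean ℙ ξ P)).toReal else 0) := by
      rw [← EReal.coe_le_coe_iff, EReal.coe_toReal hQne hQnb]
      exact hkey
    calc (ℙ (ξ ⁻¹' R)).toReal * (Qfun W q x (condMean ℙ ξ R)).toReal
        ≤ (ℙ (ξ ⁻¹' R)).toReal * (((ℙ (ξ ⁻¹' R)).toReal)⁻¹ * _) :=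
          mul_le_mul_of_nonneg_left ht hpRpos.le
      _ = _ := by field_simp

end
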